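/- For all y, z ∈ ℤ_p and all continuous φ : ℤ_p → ℂ_p, one has S^{y+z}(φ) = S^y(S^z(φ)). -/

import Mathlib

open Finset

/-- `(x choose k)` on `ℤ_p`, valued in a normed `ℚ_p`-algebra `K` (modelling `ℂ_p`). -/
noncomputable def padicBinom (p : ℕ) [Fact p.Prime] (K : Type*) [NormedField K]
    [NormedAlgebra ℚ_[p] K] (x : ℤ_[p]) (k : ℕ) : K :=
  algebraMap ℚ_[p] K ((∏ i ∈ Finset.range k, ((x : ℚ_[p]) - (i : ℚ_[p]))) / (k.factorial : ℚ_[p]))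

/-- The operator `S^y`, `S^y(φ)(x) = ∑_{k≥0} (-1)^k k! (y choose k)(x choose k) φ(x-k)`. -/
noncomputable def Sop (p : ℕ) [Fact p.Prime] {K : Type*} [NormedField K]
    [NormedAlgebra ℚ_[p] K] (y : ℤ_[p]) (φ : ℤ_[p] → K) : ℤ_[p] → K :=
  fun x => ∑' k : ℕ,
    (-1 : K) ^ k * (k.factorial : K) * padicBinom p K y k * padicBinom p K x k * φ (x - (k : ℤ_[p]))

namespace SopAux

open Filter

variable {p : ℕ} [hp : Fact p.Prime]

/-! ### The integral product `P` and its norm decay -/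

/-- The falling-factorial-type product in `ℤ_[p]`. -/
noncomputable def P (y : ℤ_[p]) (k : ℕ) : ℤ_[p] := ∏ i ∈ range k, (y - (i : ℤ_[p]))

lemma norm_P_le_one (y : ℤ_[p]) (k : ℕ) : ‖P y k‖ ≤ 1 := PadicInt.norm_le_one _

lemma norm_P_p_le (w : ℤ_[p]) : ‖P w p‖ ≤ (p : ℝ)⁻¹ := by
  haveI : NeZero p := ⟨hp.out.ne_zero⟩
  set c : ℕ := (PadicInt.toZMod w).val with hc
  have hclt : c < p := ZMod.val_lt _
  have hmem : c ∈ range p := mem_range.mpr hclt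
  have hsub : ‖w - (c : ℤ_[p])‖ ≤ (p : ℝ)⁻¹ := by
    have h1 : w - (c : ℤ_[p]) ∈ IsLocalRing.maximalIdeal ℤ_[p] := by
      have := PadicInt.toZMod_spec w
      rwa [← ZMod.natCast_val] at this
    rw [PadicInt.maximalIdeal_eq_span_p] at h1
    have := (PadicInt.norm_le_pow_iff_mem_span_pow (w - (c : ℤ_[p])) 1).mpr (by simpa using h1)
    simpa [zpow_neg, zpow_one] using this
  calc ‖P w p‖ = ‖(w - (c : ℤ_[p])) * ∏ i ∈ (range p).erase c, (w - (i : ℤ_[p]))‖ := by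
        rw [P, ← Finset.mul_prod_erase (range p) (fun i => w - (i : ℤ_[p])) hmem]
    _ = ‖w - (c : ℤ_[p])‖ * ‖∏ i ∈ (range p).erase c, (w - (i : ℤ_[p]))‖ := norm_mul _ _
    _ ≤ (p : ℝ)⁻¹ * 1 := by
        apply mul_le_mul hsub (PadicInt.norm_le_one _) (norm_nonneg _)
        positivity
    _ = (p : ℝ)⁻¹ := mul_one _

lemma norm_P_add_p_le (y : ℤ_[p]) (k : ℕ) : ‖P y (k + p)‖ ≤ ‖P y k‖ * (p : ℝ)⁻¹ := by
  have hsplit : P y (k + p) = P y k * P (y - (k : ℤ_[p])) p := by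
    rw [P, P, P, Finset.prod_range_add]
    congr 1
    refine Finset.prod_congr rfl fun i _ => ?_
    push_cast
    ring
  rw [hsplit, norm_mul]
  exact mul_le_mul_of_nonneg_left (norm_P_p_le _) (norm_nonneg _)

lemma norm_P_le_pow (y : ℤ_[p]) : ∀ n k, n * p ≤ k → ‖P y k‖ ≤ ((p : ℝ)⁻¹) ^ n := by
  intro n
  induction n with
  | zero => intro k _; simpa using norm_P_le_one y k
  | succ n ih =>
    intro k hk
    have hpk : p ≤ k := le_trans (by nlinarith [Nat.le_add_left p (n * p)]) hk
    have hm : (k - p) + p = k := Nat.sub_add_cancel hpk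
    have hm' : n * p ≤ k - p := by
      have : (n+1) * p = n * p + p := by ring
      omega
    calc ‖P y k‖ = ‖P y ((k - p) + p)‖ := by rw [hm]
      _ ≤ ‖P y (k - p)‖ * (p : ℝ)⁻¹ := norm_P_add_p_le y (k - p)
      _ ≤ ((p : ℝ)⁻¹) ^ n * (p : ℝ)⁻¹ := by
          apply mul_le_mul_of_nonneg_right (ih _ hm') (by positivity)
      _ = ((p : ℝ)⁻¹) ^ (n + 1) := by rw [pow_succ]

lemma norm_P_small (y : ℤ_[p]) {ε : ℝ} (hε : 0 < ε) : ∃ N, ∀ k, N ≤ k → ‖P y k‖ < ε := by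
  have hp1 : (1 : ℝ) < p := by exact_mod_cast hp.out.one_lt
  have hinv : (p : ℝ)⁻¹ < 1 := inv_lt_one_of_one_lt₀ hp1
  obtain ⟨n, hn⟩ := exists_pow_lt_of_lt_one hε hinv
  refine ⟨n * p, fun k hk => lt_of_le_of_lt (norm_P_le_pow y n k hk) hn⟩

/-! ### The `ℚ_p`-valued binomial `Qbin` -/

/-- `x choose k` in `ℚ_[p]`. -/
noncomputable def Qbin (x : ℤ_[p]) (k : ℕ) : ℚ_[p] :=
  (∏ i ∈ range k, ((x : ℚ_[p]) - (i : ℚ_[p]))) / (k.factorial : ℚ_[p])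

lemma continuous_coe : Continuous (fun x : ℤ_[p] => (x : ℚ_[p])) := by
  have h : Isometry (fun x : ℤ_[p] => (x : ℚ_[p])) := fun x y => rfl
  exact h.continuous

lemma continuous_Qbin (k : ℕ) : Continuous (fun x : ℤ_[p] => Qbin x k) := by
  unfold Qbin
  exact (continuous_finset_prod _ fun i _ => (continuous_coe.sub continuous_const)).div_const _

lemma prod_range_natCast (F : Type*) [Field F] [CharZero F] (n k : ℕ) :
    (∏ i ∈ range k, ((n : F) - (i : F))) = (n.descFactorial k : F) := by
  induction k with
  | zero => simp
  | succ k ih =>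
    rw [prod_range_succ, ih, Nat.descFactorial_succ]
    by_cases h : n < k
    · rw [Nat.descFactorial_eq_zero_iff_lt.mpr h]
      simp
    · push_neg at h
      rw [Nat.cast_mul, Nat.cast_sub h]
      ring

lemma Qbin_natCast (n k : ℕ) : Qbin (n : ℤ_[p]) k = (n.choose k : ℚ_[p]) := by
  have h0 : ((n : ℤ_[p]) : ℚ_[p]) = (n : ℚ_[p]) := by push_cast; rfl
  rw [Qbin, h0, prod_range_natCast, Nat.descFactorial_eq_factorial_mul_choose,
    Nat.cast_mul, mul_div_cancel_left₀]
  exact_mod_cast (Nat.factorial_ne_zero k)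

lemma norm_Qbin_le_one (x : ℤ_[p]) (k : ℕ) : ‖Qbin x k‖ ≤ 1 := by
  have hclosed : IsClosed {x : ℤ_[p] | ‖Qbin x k‖ ≤ 1} :=
    isClosed_le ((continuous_Qbin k).norm) continuous_const
  have hsub : Set.range (Nat.cast : ℕ → ℤ_[p]) ⊆ {x : ℤ_[p] | ‖Qbin x k‖ ≤ 1} := by
    rintro _ ⟨n, rfl⟩
    simp only [Set.mem_setOf_eq, Qbin_natCast]
    have := Padic.norm_int_le_one (p := p) (n.choose k : ℤ)
    simpa using this
  exact closure_minimal hsub hclosed (PadicInt.denseRange_natCast x)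

set_option maxHeartbeats 1000000 in
/-- Vandermonde for `Qbin`. -/
lemma Qbin_add (y z : ℤ_[p]) (k : ℕ) :
    Qbin (y + z) k = ∑ ij ∈ antidiagonal k, Qbin y ij.1 * Qbin z ij.2 := by
  have hclosed : IsClosed {ab : ℤ_[p] × ℤ_[p] |
      Qbin (ab.1 + ab.2) k = ∑ ij ∈ antidiagonal k, Qbin ab.1 ij.1 * Qbin ab.2 ij.2} := by
    apply isClosed_eq
    · exact (continuous_Qbin k).comp (continuous_fst.add continuous_snd)
    · exact continuous_finset_sum _ fun ij _ =>
        ((continuous_Qbin ij.1).comp continuous_fst).mul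
          ((continuous_Qbin ij.2).comp continuous_snd)
  have hdense : DenseRange (Prod.map (Nat.cast : ℕ → ℤ_[p]) (Nat.cast : ℕ → ℤ_[p])) :=
    PadicInt.denseRange_natCast.prodMap PadicInt.denseRange_natCast
  have hsub : Set.range (Prod.map (Nat.cast : ℕ → ℤ_[p]) (Nat.cast : ℕ → ℤ_[p])) ⊆
      {ab : ℤ_[p] × ℤ_[p] |
        Qbin (ab.1 + ab.2) k = ∑ ij ∈ antidiagonal k, Qbin ab.1 ij.1 * Qbin ab.2 ij.2} := by
    rintro _ ⟨⟨n, m⟩, rfl⟩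
    simp only [Prod.map, Set.mem_setOf_eq]
    have h0 : ((n : ℤ_[p]) + (m : ℤ_[p])) = ((n + m : ℕ) : ℤ_[p]) := by push_cast; ring
    rw [h0, Qbin_natCast]
    rw [Nat.add_choose_eq]
    push_cast
    exact Finset.sum_congr rfl fun ij _ => by rw [Qbin_natCast, Qbin_natCast]
  exact closure_minimal hsub hclosed (hdense (y, z))

/-- Chu--Vandermonde style product rule: `Qbin x j * Qbin (x - j) m = C(j+m, j) * Qbin x (j+m)`. -/
lemma Qbin_mul_shift (x : ℤ_[p]) (j m : ℕ) :
    Qbin x j * Qbin (x - (j : ℤ_[p])) m = ((j + m).choose j : ℚ_[p]) * Qbin x (j + m) := by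
  have hprod : (∏ i ∈ range j, ((x : ℚ_[p]) - (i : ℚ_[p]))) *
      (∏ i ∈ range m, (((x - (j : ℤ_[p]) : ℤ_[p]) : ℚ_[p]) - (i : ℚ_[p]))) =
      ∏ i ∈ range (j + m), ((x : ℚ_[p]) - (i : ℚ_[p])) := by
    rw [Finset.prod_range_add]
    congr 1
    refine Finset.prod_congr rfl fun i _ => ?_
    push_cast
    ring
  have hfac : ((j + m).choose j : ℚ_[p]) * (j.factorial : ℚ_[p]) * (m.factorial : ℚ_[p]) =
      ((j + m).factorial : ℚ_[p]) := by
    have h := Nat.add_choose_mul_factorial_mul_factorial j m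
    rw [← Nat.choose_symm_add] at h
    exact_mod_cast h
  have hj : (j.factorial : ℚ_[p]) ≠ 0 := by exact_mod_cast j.factorial_ne_zero
  have hm : (m.factorial : ℚ_[p]) ≠ 0 := by exact_mod_cast m.factorial_ne_zero
  have hjm : ((j + m).factorial : ℚ_[p]) ≠ 0 := by exact_mod_cast (j + m).factorial_ne_zero
  rw [Qbin, Qbin, Qbin, div_mul_div_comm, hprod]
  field_simp
  linear_combination (-(∏ i ∈ range (j + m), ((x : ℚ_[p]) - (i : ℚ_[p])))) * hfac

lemma coe_P (y : ℤ_[p]) (k : ℕ) :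
    ((P y k : ℤ_[p]) : ℚ_[p]) = ∏ i ∈ range k, ((y : ℚ_[p]) - (i : ℚ_[p])) := by
  induction k with
  | zero => simp [P]
  | succ k ih =>
    rw [P, Finset.prod_range_succ, ← P, PadicInt.coe_mul, ih, Finset.prod_range_succ,
      PadicInt.coe_sub]
    push_cast
    ring

variable {K : Type*} [NormedField K] [NormedAlgebra ℚ_[p] K]

lemma padicBinom_eq (x : ℤ_[p]) (k : ℕ) :
    padicBinom p K x k = algebraMap ℚ_[p] K (Qbin x k) := rfl

lemma fact_mul (w : ℤ_[p]) (k : ℕ) :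
    (k.factorial : K) * padicBinom p K w k = algebraMap ℚ_[p] K ((P w k : ℚ_[p])) := by
  rw [padicBinom_eq, ← map_natCast (algebraMap ℚ_[p] K), ← map_mul, coe_P]
  congr 1
  rw [Qbin, mul_comm, div_mul_cancel₀]
  exact_mod_cast k.factorial_ne_zero

lemma D_eq (w : ℤ_[p]) (k : ℕ) :
    (-1 : K) ^ k * (k.factorial : K) * padicBinom p K w k
      = (-1 : K) ^ k * algebraMap ℚ_[p] K ((P w k : ℚ_[p])) := by
  rw [mul_assoc, fact_mul]

lemma norm_padicBinom_le_one (x : ℤ_[p]) (k : ℕ) : ‖padicBinom p K x k‖ ≤ 1 := by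
  rw [padicBinom_eq, norm_algebraMap']
  exact norm_Qbin_le_one x k

/-- The per-pair algebraic identity. -/
lemma pair_eq (x y z : ℤ_[p]) (c : K) (j m : ℕ) :
    (-1 : K) ^ j * (j.factorial : K) * padicBinom p K y j * padicBinom p K x j *
      ((-1 : K) ^ m * (m.factorial : K) * padicBinom p K z m *
        padicBinom p K (x - (j : ℤ_[p])) m * c)
    = (-1 : K) ^ (j + m) * ((j + m).factorial : K) *
        algebraMap ℚ_[p] K (Qbin y j * Qbin z m) * padicBinom p K x (j + m) * c := by
  set q := algebraMap ℚ_[p] K with hq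
  have keyK : q (Qbin x j) * q (Qbin (x - (j : ℤ_[p])) m)
      = ((j + m).choose j : K) * q (Qbin x (j + m)) := by
    rw [← map_mul, Qbin_mul_shift, map_mul, map_natCast]
  have hfacN := Nat.add_choose_mul_factorial_mul_factorial j m
  rw [← Nat.choose_symm_add] at hfacN
  have hfacK : ((j + m).choose j : K) * (j.factorial : K) * (m.factorial : K)
      = ((j + m).factorial : K) := by
    have h2 := congrArg (Nat.cast (R := K)) hfacN
    push_cast at h2
    exact h2
  simp only [padicBinom_eq, ← hq, map_mul, pow_add]
  linear_combination ((-1 : K) ^ j * (-1 : K) ^ m * (j.factorial : K) * (m.factorial : K) *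
      q (Qbin y j) * q (Qbin z m) * c) * keyK +
    ((-1 : K) ^ j * (-1 : K) ^ m * q (Qbin y j) * q (Qbin z m) * q (Qbin x (j + m)) * c) * hfacK

lemma norm_D (w : ℤ_[p]) (k : ℕ) :
    ‖(-1 : K) ^ k * algebraMap ℚ_[p] K ((P w k : ℚ_[p]))‖ = ‖P w k‖ := by
  rw [norm_mul, norm_pow, norm_neg, norm_one, one_pow, one_mul, norm_algebraMap',
    ← PadicInt.norm_def]

end SopAux

open SopAux Filter in
set_option maxHeartbeats 1000000 in
/-- For all `y, z ∈ ℤ_p` and continuous `φ : ℤ_p → ℂ_p`, `S^{y+z}(φ) = S^y(S^z(φ))`. -/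
theorem Sop_add (p : ℕ) [Fact p.Prime] (K : Type*) [NontriviallyNormedField K]
    [NormedAlgebra ℚ_[p] K] [IsUltrametricDist K] [CompleteSpace K]
    (y z : ℤ_[p]) (φ : ℤ_[p] → K) (hφ : Continuous φ) :
    Sop p (y + z) φ = Sop p y (Sop p z φ) := by
  funext x
  set q := algebraMap ℚ_[p] K with hq
  -- a bound for φ
  obtain ⟨C, hC⟩ : ∃ C, ∀ t, ‖φ t‖ ≤ C := by
    obtain ⟨C, hC⟩ := isCompact_univ.exists_bound_of_continuousOn (hφ.continuousOn (s := Set.univ))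
    exact ⟨C, fun t => hC t (Set.mem_univ t)⟩
  set C0 : ℝ := max C 0 with hC0
  have hC0' : ∀ t, ‖φ t‖ ≤ C0 := fun t => le_trans (hC t) (le_max_left _ _)
  have hC0nn : 0 ≤ C0 := le_max_right _ _
  -- the double-indexed family
  set F : ℕ × ℕ → K := fun jm =>
    (-1 : K) ^ jm.1 * (jm.1.factorial : K) * padicBinom p K y jm.1 * padicBinom p K x jm.1 *
      ((-1 : K) ^ jm.2 * (jm.2.factorial : K) * padicBinom p K z jm.2 *
        padicBinom p K (x - (jm.1 : ℤ_[p])) jm.2 *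
        φ (x - (jm.1 : ℤ_[p]) - (jm.2 : ℤ_[p]))) with hF
  -- norm bound for F
  have hFbound : ∀ jm : ℕ × ℕ, ‖F jm‖ ≤ ‖P y jm.1‖ * (‖P z jm.2‖ * C0) := by
    rintro ⟨j, m⟩
    have he : ‖F (j, m)‖ = ‖P y j‖ * ‖Qbin x j‖ *
        (‖P z m‖ * ‖Qbin (x - (j : ℤ_[p])) m‖ * ‖φ (x - (j : ℤ_[p]) - (m : ℤ_[p]))‖) := by
      simp only [hF, D_eq]
      simp only [padicBinom_eq, hq]
      simp only [norm_mul, norm_pow, norm_neg, norm_one, one_pow, one_mul,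
        norm_algebraMap', ← PadicInt.norm_def]
      try ring
    rw [he]
    calc ‖P y j‖ * ‖Qbin x j‖ *
        (‖P z m‖ * ‖Qbin (x - (j : ℤ_[p])) m‖ * ‖φ (x - (j : ℤ_[p]) - (m : ℤ_[p]))‖)
        ≤ ‖P y j‖ * 1 * (‖P z m‖ * 1 * C0) := by
          gcongr <;> first
            | exact norm_nonneg _
            | exact norm_Qbin_le_one _ _
            | exact hC0' _
            | positivity
      _ = ‖P y j‖ * (‖P z m‖ * C0) := by ring
  -- summability of F
  have hPy1 : ∀ k, ‖P (p := p) y k‖ ≤ 1 := norm_P_le_one y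
  have hPz1 : ∀ k, ‖P (p := p) z k‖ ≤ 1 := norm_P_le_one z
  have hF_sum : Summable F := by
    apply NonarchimedeanAddGroup.summable_of_tendsto_cofinite_zero
    rw [NormedAddCommGroup.tendsto_nhds_zero]
    intro ε hε
    rw [Filter.eventually_cofinite]
    have hδ : 0 < ε / (C0 + 1) := by positivity
    obtain ⟨N1, hN1⟩ := norm_P_small y hδ
    obtain ⟨N2, hN2⟩ := norm_P_small z hδ
    have hkey : ∀ jm : ℕ × ℕ, (N1 ≤ jm.1 ∨ N2 ≤ jm.2) → ‖F jm‖ < ε := by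
      rintro ⟨j, m⟩ hjm
      have hlt : ‖P (p := p) y j‖ * (‖P (p := p) z m‖ * C0) < ε := by
        have hC0lt : C0 * (ε / (C0 + 1)) < ε := by
          rw [mul_div_assoc']
          rw [div_lt_iff₀ (by positivity)]
          nlinarith
        rcases hjm with hj | hm
        · have h1 : ‖P (p := p) y j‖ * (‖P (p := p) z m‖ * C0) ≤ (ε / (C0 + 1)) * C0 := by
            calc ‖P (p := p) y j‖ * (‖P (p := p) z m‖ * C0)
                ≤ (ε / (C0 + 1)) * (1 * C0) := by
                  gcongr <;> first
                    | exact norm_nonneg _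
                    | exact (hN1 j hj).le
                    | exact hPz1 m
                    | positivity
              _ = (ε / (C0 + 1)) * C0 := by ring
          calc ‖P (p := p) y j‖ * (‖P (p := p) z m‖ * C0) ≤ (ε / (C0 + 1)) * C0 := h1
            _ = C0 * (ε / (C0 + 1)) := by ring
            _ < ε := hC0lt
        · have h1 : ‖P (p := p) y j‖ * (‖P (p := p) z m‖ * C0) ≤ (ε / (C0 + 1)) * C0 := by
            calc ‖P (p := p) y j‖ * (‖P (p := p) z m‖ * C0)
                ≤ 1 * ((ε / (C0 + 1)) * C0) := by
                  gcongr <;> first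
                    | exact hPy1 j
                    | exact (hN2 m hm).le
                    | positivity
              _ = (ε / (C0 + 1)) * C0 := by ring
          calc ‖P (p := p) y j‖ * (‖P (p := p) z m‖ * C0) ≤ (ε / (C0 + 1)) * C0 := h1
            _ = C0 * (ε / (C0 + 1)) := by ring
            _ < ε := hC0lt
      exact lt_of_le_of_lt (hFbound (j, m)) hlt
    apply Set.Finite.subset ((Set.finite_Iio N1).prod (Set.finite_Iio N2))
    rintro ⟨j, m⟩ hjm
    simp only [Set.mem_setOf_eq, not_lt] at hjm
    by_contra hmem
    simp only [Set.mem_prod, Set.mem_Iio, not_and_or, not_lt] at hmem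
    exact absurd (hkey (j, m) hmem) (not_lt.mpr hjm)
  have hF_sum_fib : ∀ j, Summable fun m => F (j, m) := fun j => hF_sum.prod_factor j
  -- the computation
  have step1 : Sop p y (Sop p z φ) x = ∑' j, ∑' m, F (j, m) := by
    rw [Sop]
    refine tsum_congr fun j => ?_
    rw [Sop]
    exact (tsum_mul_left).symm
  have step2 : ∑' j, ∑' m, F (j, m) = ∑' jm : ℕ × ℕ, F jm := (Summable.tsum_prod' hF_sum hF_sum_fib).symm
  have step3 : ∑' jm : ℕ × ℕ, F jm
      = ∑' k : ℕ, ∑' ij : (antidiagonal k : Finset (ℕ × ℕ)), F (ij : ℕ × ℕ) := by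
    rw [← Finset.HasAntidiagonal.sigmaAntidiagonalEquivProd.tsum_eq F]
    exact Summable.tsum_sigma' (fun k => (hasSum_fintype _).summable)
      (Finset.HasAntidiagonal.sigmaAntidiagonalEquivProd.summable_iff.mpr hF_sum)
  have step4 : ∀ k : ℕ, ∑' ij : (antidiagonal k : Finset (ℕ × ℕ)), F (ij : ℕ × ℕ)
      = ∑ ij ∈ antidiagonal k, F ij := fun k => Finset.tsum_subtype _ _
  have step5 : ∀ k : ℕ, ∑ ij ∈ antidiagonal k, F ij
      = (-1 : K) ^ k * (k.factorial : K) * padicBinom p K (y + z) k * padicBinom p K x k *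
        φ (x - (k : ℤ_[p])) := by
    intro k
    have hterm : ∀ ij ∈ antidiagonal k, F ij
        = q (Qbin y ij.1 * Qbin z ij.2) *
          ((-1 : K) ^ k * (k.factorial : K) * padicBinom p K x k * φ (x - (k : ℤ_[p]))) := by
      rintro ⟨j, m⟩ hij
      rw [Finset.HasAntidiagonal.mem_antidiagonal] at hij
      have hij' : j + m = k := hij
      have hcast : (j : ℤ_[p]) + (m : ℤ_[p]) = (k : ℤ_[p]) := by exact_mod_cast hij'
      have harg : x - (j : ℤ_[p]) - (m : ℤ_[p]) = x - (k : ℤ_[p]) := by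
        rw [sub_sub, hcast]
      have := pair_eq (K := K) x y z (φ (x - (j : ℤ_[p]) - (m : ℤ_[p]))) j m
      rw [hF]
      simp only []
      rw [this, hij, harg, ← hq]
      ring
    rw [Finset.sum_congr rfl hterm, ← Finset.sum_mul, ← map_sum, ← Qbin_add,
      padicBinom_eq (p := p) (K := K) (y + z) k, ← hq]
    ring
  rw [step1, step2, step3]
  rw [Sop]
  refine tsum_congr fun k => ?_
  rw [step4 k, step5 k]
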